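/- arXiv:1712.02298 — 3 statements merged into one kernel-verified Lean document; each statement's English description precedes it below -/
import Mathlib

section
/- Let 1 < ν ≤ 2 and φ(x) = (1 + |x|²)^{ν/2} − 1 on ℝⁿ. Then there exists K = K(ν) > 0 such that for all x, y ∈ ℝⁿ, |x − y|² / (1 + |x|^{2−ν} + |y|^{2−ν}) ≤ (1/K) (∇φ(x) − ∇φ(y)) · (x − y). -/
open scoped RealInnerProductSpace

private lemma hderiv (ν : ℝ) (u : ℝ) :
    HasDerivAt (fun u : ℝ => ν * (u * (1 + u ^ 2) ^ (ν / 2 - 1)))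
      (ν * ((1 + u ^ 2) ^ (ν / 2 - 1) + u * (2 * u * (ν / 2 - 1) * (1 + u ^ 2) ^ (ν / 2 - 1 - 1)))) u := by
  have hpos : (0:ℝ) < 1 + u ^ 2 := by positivity
  have g1 : HasDerivAt (fun u : ℝ => 1 + u ^ 2) (2 * u) u := by
    simpa using (hasDerivAt_pow 2 u).const_add 1
  have g2 := g1.rpow_const (p := ν / 2 - 1) (Or.inl (ne_of_gt hpos))
  have g3 := (hasDerivAt_id u).mul g2
  have g4 := g3.const_mul ν
  refine g4.congr_deriv ?_
  simp only [id_eq]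
  ring

private lemma deriv_lb (ν : ℝ) (hν1 : 1 < ν) (hν2 : ν ≤ 2) (M u : ℝ) (hu : |u| ≤ M) :
    ν * (ν - 1) * (1 + M ^ 2) ^ (ν / 2 - 1) ≤
      ν * ((1 + u ^ 2) ^ (ν / 2 - 1) + u * (2 * u * (ν / 2 - 1) * (1 + u ^ 2) ^ (ν / 2 - 1 - 1))) := by
  have hpos : (0:ℝ) < 1 + u ^ 2 := by positivity
  have hsq : u ^ 2 ≤ M ^ 2 := sq_le_sq' (neg_abs_le u |>.trans' (by linarith [abs_nonneg u])) (le_of_abs_le hu) |>.trans_eq rfl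
  -- rewrite (1+u²)^p = (1+u²)^{p-1} * (1+u²)
  have hsplit : (1 + u ^ 2) ^ (ν / 2 - 1) = (1 + u ^ 2) ^ (ν / 2 - 1 - 1) * (1 + u ^ 2) := by
    have h := Real.rpow_add hpos (ν / 2 - 1 - 1) 1
    rw [Real.rpow_one] at h
    rw [show ν / 2 - 1 = ν / 2 - 1 - 1 + 1 by ring, h]
    ring_nf
  have h1 : (1 + M ^ 2) ^ (ν / 2 - 1) ≤ (1 + u ^ 2) ^ (ν / 2 - 1) :=
    Real.rpow_le_rpow_of_nonpos hpos (by linarith) (by linarith)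
  have h2 : (0:ℝ) < (1 + u ^ 2) ^ (ν / 2 - 1 - 1) := Real.rpow_pos_of_pos hpos _
  have h3 : (ν - 1) * (1 + u ^ 2) ≤ 1 + (ν - 1) * u ^ 2 := by nlinarith [sq_nonneg u]
  have key : ν * (ν - 1) * (1 + u ^ 2) ^ (ν / 2 - 1) ≤
      ν * ((1 + u ^ 2) ^ (ν / 2 - 1) + u * (2 * u * (ν / 2 - 1) * (1 + u ^ 2) ^ (ν / 2 - 1 - 1))) := by
    rw [hsplit]
    have hν0 : (0:ℝ) < ν := by linarith
    have h4 : (0:ℝ) ≤ ν * (1 + u ^ 2) ^ (ν / 2 - 1 - 1) := le_of_lt (mul_pos hν0 h2)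
    have h5 := mul_le_mul_of_nonneg_left h3 h4
    nlinarith [h5]
  refine le_trans ?_ key
  have := mul_le_mul_of_nonneg_left h1 (by nlinarith : (0:ℝ) ≤ ν * (ν - 1))
  linarith

/-- 1D monotonicity with ordering hypothesis. -/
private lemma key1' (ν : ℝ) (hν1 : 1 < ν) (hν2 : ν ≤ 2) (s t : ℝ) (hts : t ≤ s) :
    ν * (ν - 1) / 2 * (s - t) ^ 2 ≤
      (1 + |s| ^ (2 - ν) + |t| ^ (2 - ν)) *
        ((ν * (s * (1 + s ^ 2) ^ (ν / 2 - 1)) - ν * (t * (1 + t ^ 2) ^ (ν / 2 - 1))) * (s - t)) := by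
  set M : ℝ := max |s| |t| with hM
  have hM0 : 0 ≤ M := le_trans (abs_nonneg s) (le_max_left _ _)
  set m : ℝ := ν * (ν - 1) * (1 + M ^ 2) ^ (ν / 2 - 1) with hm
  have hm0 : 0 ≤ m := by
    have hr := Real.rpow_pos_of_pos (show (0:ℝ) < 1 + M ^ 2 by positivity) (ν / 2 - 1)
    have : (0:ℝ) < ν * (ν - 1) := mul_pos (by linarith) (by linarith)
    exact le_of_lt (mul_pos this hr)
  -- Step 1: h s - h t ≥ m (s - t)
  have hmono : m * (s - t) ≤ ν * (s * (1 + s ^ 2) ^ (ν / 2 - 1)) - ν * (t * (1 + t ^ 2) ^ (ν / 2 - 1)) := by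
    set F : ℝ → ℝ := fun u => ν * (u * (1 + u ^ 2) ^ (ν / 2 - 1)) - m * u with hF
    have hd : ∀ u : ℝ, HasDerivAt F
        (ν * ((1 + u ^ 2) ^ (ν / 2 - 1) + u * (2 * u * (ν / 2 - 1) * (1 + u ^ 2) ^ (ν / 2 - 1 - 1))) - m) u :=
      fun u => (hderiv ν u).sub ((hasDerivAt_id u).const_mul m |>.congr_deriv (by ring))
    have hmonoF : MonotoneOn F (Set.Icc t s) := by
      apply monotoneOn_of_deriv_nonneg (convex_Icc t s)
      · exact fun u _ => (hd u).continuousAt.continuousWithinAt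
      · exact fun u _ => ((hd u).differentiableAt).differentiableWithinAt
      · intro u hu
        rw [interior_Icc] at hu
        rw [(hd u).deriv]
        have huM : |u| ≤ M := by
          rw [abs_le]
          constructor
          · have : -|t| ≤ t := neg_abs_le t
            have : -M ≤ t := le_trans (neg_le_neg (le_max_right |s| |t|)) (neg_abs_le t)
            linarith [hu.1]
          · have : s ≤ M := le_trans (le_abs_self s) (le_max_left _ _)
            linarith [hu.2]
        have := deriv_lb ν hν1 hν2 M u huM
        rw [← hm] at this
        linarith
    have := hmonoF (Set.mem_Icc.2 ⟨le_refl t, hts⟩) (Set.mem_Icc.2 ⟨hts, le_refl s⟩) hts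
    simp only [hF] at this
    linarith
  -- Step 2: (1+M²)^{ν/2-1} * (1 + M^{2-ν}) ≥ 1/2
  have hstep2 : (1:ℝ) / 2 ≤ (1 + M ^ 2) ^ (ν / 2 - 1) * (1 + M ^ (2 - ν)) := by
    have hMq : (0:ℝ) ≤ M ^ (2 - ν) := Real.rpow_nonneg hM0 _
    have hpM : (0:ℝ) < 1 + M ^ 2 := by positivity
    have hkey : (1 + M ^ 2) ^ ((2 - ν) / 2) ≤ 2 * (1 + M ^ (2 - ν)) := by
      rcases le_total M 1 with hM1 | hM1
      · have : (1 + M ^ 2) ^ ((2 - ν) / 2) ≤ (2:ℝ) ^ ((2 - ν) / 2) :=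
          Real.rpow_le_rpow (by positivity) (by nlinarith) (by linarith)
        have h2 : (2:ℝ) ^ ((2 - ν) / 2) ≤ (2:ℝ) ^ (1:ℝ) :=
          Real.rpow_le_rpow_of_exponent_le (by norm_num) (by linarith)
        rw [Real.rpow_one] at h2
        linarith
      · have hM0' : (0:ℝ) < M := lt_of_lt_of_le one_pos hM1
        have h1 : (1 + M ^ 2) ^ ((2 - ν) / 2) ≤ (2 * M ^ 2) ^ ((2 - ν) / 2) :=
          Real.rpow_le_rpow (by positivity) (by nlinarith) (by linarith)
        have h2 : (2 * M ^ 2 : ℝ) ^ ((2 - ν) / 2) = 2 ^ ((2 - ν) / 2) * M ^ (2 - ν) := by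
          rw [Real.mul_rpow (by norm_num) (by positivity)]
          congr 1
          rw [← Real.rpow_natCast M 2, ← Real.rpow_mul (le_of_lt hM0')]
          congr 1
          ring
        have h3 : (2:ℝ) ^ ((2 - ν) / 2) ≤ 2 := by
          have := Real.rpow_le_rpow_of_exponent_le (show (1:ℝ) ≤ 2 by norm_num) (show (2 - ν)/2 ≤ (1:ℝ) by linarith)
          simpa using this
        calc (1 + M ^ 2) ^ ((2 - ν) / 2) ≤ 2 ^ ((2 - ν) / 2) * M ^ (2 - ν) := by rw [← h2]; exact h1
          _ ≤ 2 * M ^ (2 - ν) := by nlinarith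
          _ ≤ 2 * (1 + M ^ (2 - ν)) := by linarith
    -- (1+M²)^{ν/2-1} = ((1+M²)^{(2-ν)/2})⁻¹
    have hinv : (1 + M ^ 2) ^ (ν / 2 - 1) = ((1 + M ^ 2) ^ ((2 - ν) / 2))⁻¹ := by
      rw [← Real.rpow_neg (le_of_lt hpM)]
      congr 1
      ring
    rw [hinv]
    have hq0 : (0:ℝ) < (1 + M ^ 2) ^ ((2 - ν) / 2) := Real.rpow_pos_of_pos hpM _
    rw [inv_mul_eq_div, le_div_iff₀ hq0]
    linarith
  -- Step 3: D ≥ 1 + M^{2-ν}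
  have hD : 1 + M ^ (2 - ν) ≤ 1 + |s| ^ (2 - ν) + |t| ^ (2 - ν) := by
    rcases max_cases |s| |t| with ⟨hMe, _⟩ | ⟨hMe, _⟩ <;> rw [hM, hMe] <;>
      [linarith [Real.rpow_nonneg (abs_nonneg t) (2 - ν)];
       linarith [Real.rpow_nonneg (abs_nonneg s) (2 - ν)]]
  -- Assemble
  have hst : 0 ≤ s - t := by linarith
  have hDpos : 0 ≤ 1 + M ^ (2 - ν) := by positivity
  have hhst : 0 ≤ (ν * (s * (1 + s ^ 2) ^ (ν / 2 - 1)) - ν * (t * (1 + t ^ 2) ^ (ν / 2 - 1))) :=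
    le_trans (mul_nonneg hm0 hst) hmono
  have c1 : ν * (ν - 1) / 2 * (s - t) ^ 2 ≤ (1 + M ^ (2 - ν)) * (m * (s - t)) * (s - t) := by
    have hX : (0:ℝ) ≤ ν * (ν - 1) * (s - t) ^ 2 :=
      mul_nonneg (mul_nonneg (by linarith) (by linarith)) (sq_nonneg _)
    have h6 := mul_le_mul_of_nonneg_right hstep2 hX
    rw [hm]
    nlinarith [h6]
  have c2 : (1 + M ^ (2 - ν)) * (m * (s - t)) * (s - t) ≤
      (1 + M ^ (2 - ν)) * ((ν * (s * (1 + s ^ 2) ^ (ν / 2 - 1)) - ν * (t * (1 + t ^ 2) ^ (ν / 2 - 1))) * (s - t)) := by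
    have := mul_le_mul_of_nonneg_right hmono hst
    nlinarith
  have c3 : (1 + M ^ (2 - ν)) * ((ν * (s * (1 + s ^ 2) ^ (ν / 2 - 1)) - ν * (t * (1 + t ^ 2) ^ (ν / 2 - 1))) * (s - t)) ≤
      (1 + |s| ^ (2 - ν) + |t| ^ (2 - ν)) * ((ν * (s * (1 + s ^ 2) ^ (ν / 2 - 1)) - ν * (t * (1 + t ^ 2) ^ (ν / 2 - 1))) * (s - t)) :=
    mul_le_mul_of_nonneg_right hD (mul_nonneg hhst hst)
  linarith

private lemma key1 (ν : ℝ) (hν1 : 1 < ν) (hν2 : ν ≤ 2) (s t : ℝ) :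
    ν * (ν - 1) / 2 * (s - t) ^ 2 ≤
      (1 + |s| ^ (2 - ν) + |t| ^ (2 - ν)) *
        ((ν * (s * (1 + s ^ 2) ^ (ν / 2 - 1)) - ν * (t * (1 + t ^ 2) ^ (ν / 2 - 1))) * (s - t)) := by
  rcases le_total t s with h | h
  · exact key1' ν hν1 hν2 s t h
  · have := key1' ν hν1 hν2 t s h
    have e1 : (t - s) ^ 2 = (s - t) ^ 2 := by ring
    have e2 : (ν * (t * (1 + t ^ 2) ^ (ν / 2 - 1)) - ν * (s * (1 + s ^ 2) ^ (ν / 2 - 1))) * (t - s)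
        = (ν * (s * (1 + s ^ 2) ^ (ν / 2 - 1)) - ν * (t * (1 + t ^ 2) ^ (ν / 2 - 1))) * (s - t) := by ring
    rw [e1, e2] at this
    linarith [this]

private lemma lin_interp (K D ga gb a b c : ℝ) (hab : 0 < a * b)
    (hc1 : c ≤ a * b) (hc2 : -(a * b) ≤ c)
    (E1 : K * (a - b) ^ 2 ≤ D * (ga * a ^ 2 - (ga + gb) * (a * b) + gb * b ^ 2))
    (E2 : K * (a + b) ^ 2 ≤ D * (ga * a ^ 2 + (ga + gb) * (a * b) + gb * b ^ 2)) :
    K * (a ^ 2 - 2 * c + b ^ 2) ≤ D * (ga * a ^ 2 - (ga + gb) * c + gb * b ^ 2) := by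
  have h1 : 0 ≤ (a * b - c) * (D * (ga * a ^ 2 + (ga + gb) * (a * b) + gb * b ^ 2) - K * (a + b) ^ 2) :=
    mul_nonneg (by linarith) (by linarith)
  have h2 : 0 ≤ (a * b + c) * (D * (ga * a ^ 2 - (ga + gb) * (a * b) + gb * b ^ 2) - K * (a - b) ^ 2) :=
    mul_nonneg (by linarith) (by linarith)
  have key : 2 * (a * b) * ((D * (ga * a ^ 2 - (ga + gb) * c + gb * b ^ 2)) - K * (a ^ 2 - 2 * c + b ^ 2)) =
      (a * b - c) * (D * (ga * a ^ 2 + (ga + gb) * (a * b) + gb * b ^ 2) - K * (a + b) ^ 2) +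
      (a * b + c) * (D * (ga * a ^ 2 - (ga + gb) * (a * b) + gb * b ^ 2) - K * (a - b) ^ 2) := by
    ring
  nlinarith [h1, h2, key, hab]

/-- For `1 < ν ≤ 2` and `φ(x) = (1+|x|²)^{ν/2} − 1` with gradient
`∇φ(x) = ν (1+|x|²)^{ν/2−1} x`, there exists `K = K(ν) > 0` such that
`|x−y|²/(1+|x|^{2−ν}+|y|^{2−ν}) ≤ (1/K) (∇φ(x)−∇φ(y))·(x−y)` for all `x, y`. -/
theorem stmt5 (n : ℕ) (ν : ℝ) (hν1 : 1 < ν) (hν2 : ν ≤ 2)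
    (gradφ : EuclideanSpace ℝ (Fin n) → EuclideanSpace ℝ (Fin n))
    (hgrad : ∀ x, gradφ x = (ν * (1 + ‖x‖ ^ 2) ^ (ν / 2 - 1)) • x) :
    ∃ K : ℝ, 0 < K ∧ ∀ x y : EuclideanSpace ℝ (Fin n),
      ‖x - y‖ ^ 2 / (1 + ‖x‖ ^ (2 - ν) + ‖y‖ ^ (2 - ν)) ≤
        (1 / K) * ⟪gradφ x - gradφ y, x - y⟫ := by
  have hK : (0:ℝ) < ν * (ν - 1) / 2 := div_pos (mul_pos (by linarith) (by linarith)) two_pos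
  refine ⟨ν * (ν - 1) / 2, hK, fun x y => ?_⟩
  set a : ℝ := ‖x‖ with ha
  set b : ℝ := ‖y‖ with hb
  set c : ℝ := ⟪x, y⟫ with hc
  have ha0 : 0 ≤ a := norm_nonneg x
  have hb0 : 0 ≤ b := norm_nonneg y
  set ga : ℝ := ν * (1 + a ^ 2) ^ (ν / 2 - 1) with hga
  set gb : ℝ := ν * (1 + b ^ 2) ^ (ν / 2 - 1) with hgb
  have hga0 : 0 ≤ ga := by
    have := Real.rpow_pos_of_pos (show (0:ℝ) < 1 + a ^ 2 by positivity) (ν / 2 - 1)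
    nlinarith
  have hgb0 : 0 ≤ gb := by
    have := Real.rpow_pos_of_pos (show (0:ℝ) < 1 + b ^ 2 by positivity) (ν / 2 - 1)
    nlinarith
  have hI : ⟪gradφ x - gradφ y, x - y⟫ = ga * a ^ 2 - (ga + gb) * c + gb * b ^ 2 := by
    rw [hga, hgb, ha, hb, hc, hgrad x, hgrad y]
    rw [inner_sub_left, inner_sub_right, inner_sub_right, real_inner_smul_left,
      real_inner_smul_left, real_inner_smul_left, real_inner_smul_left,
      real_inner_self_eq_norm_sq, real_inner_self_eq_norm_sq, real_inner_comm y x]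
    ring
  have hnxy : ‖x - y‖ ^ 2 = a ^ 2 - 2 * c + b ^ 2 := norm_sub_sq_real x y
  have hcs : |c| ≤ a * b := abs_real_inner_le_norm x y
  have hc1 : c ≤ a * b := le_of_abs_le hcs
  have hc2 : -(a * b) ≤ c := neg_le_of_abs_le hcs
  set D : ℝ := 1 + a ^ (2 - ν) + b ^ (2 - ν) with hD
  have hDpos : 0 < D := by
    have h1 : (0:ℝ) ≤ a ^ (2 - ν) := Real.rpow_nonneg ha0 _
    have h2 : (0:ℝ) ≤ b ^ (2 - ν) := Real.rpow_nonneg hb0 _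
    rw [hD]; linarith
  have hKpos : (0:ℝ) < ν * (ν - 1) / 2 := by nlinarith
  -- two endpoint instances of key1
  have E1 := key1 ν hν1 hν2 a b
  have E2 := key1 ν hν1 hν2 a (-b)
  rw [abs_of_nonneg ha0, abs_of_nonneg hb0] at E1
  rw [abs_of_nonneg ha0, abs_neg, abs_of_nonneg hb0] at E2
  have hbb : (1 + (-b) ^ 2 : ℝ) = 1 + b ^ 2 := by ring
  rw [hbb] at E2
  -- rewrite E1, E2 in terms of ga, gb, D
  have E1' : ν * (ν - 1) / 2 * (a - b) ^ 2 ≤ D * (ga * a ^ 2 - (ga + gb) * (a * b) + gb * b ^ 2) := by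
    have : (ν * (a * (1 + a ^ 2) ^ (ν / 2 - 1)) - ν * (b * (1 + b ^ 2) ^ (ν / 2 - 1))) * (a - b)
        = ga * a ^ 2 - (ga + gb) * (a * b) + gb * b ^ 2 := by rw [hga, hgb]; ring
    rw [this] at E1
    exact E1
  have E2' : ν * (ν - 1) / 2 * (a + b) ^ 2 ≤ D * (ga * a ^ 2 + (ga + gb) * (a * b) + gb * b ^ 2) := by
    have h1 : (a - -b) ^ 2 = (a + b) ^ 2 := by ring
    have h2 : (ν * (a * (1 + a ^ 2) ^ (ν / 2 - 1)) - ν * (-b * (1 + b ^ 2) ^ (ν / 2 - 1))) * (a - -b)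
        = ga * a ^ 2 + (ga + gb) * (a * b) + gb * b ^ 2 := by rw [hga, hgb]; ring
    rw [h1, h2] at E2
    exact E2
  -- main inequality: K * ‖x-y‖² ≤ D * I
  have main : ν * (ν - 1) / 2 * (a ^ 2 - 2 * c + b ^ 2) ≤ D * (ga * a ^ 2 - (ga + gb) * c + gb * b ^ 2) := by
    rcases eq_or_lt_of_le (mul_nonneg ha0 hb0) with hab | hab
    · have hcz : c = 0 := by
        have := abs_nonneg c
        have : |c| = 0 := le_antisymm (by rw [← hab] at hcs; exact hcs) this
        exact abs_eq_zero.1 this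
      have e0 : a * b = 0 := hab.symm
      rw [hcz]
      rw [e0] at E1'
      have e1 : (a - b) ^ 2 = a ^ 2 - 2 * 0 + b ^ 2 := by
        rw [show (0:ℝ) = a * b from e0.symm]; ring
      rw [e1] at E1'
      linarith [E1']
    · exact lin_interp _ _ _ _ _ _ _ hab hc1 hc2 E1' E2'
  -- conclude
  rw [hI, hnxy, one_div_mul_eq_div, div_le_div_iff₀ hDpos hKpos]
  linarith [main]
end

section
/- Let n ≥ 2, 0 < β < 1, 1 < α ≤ 2, 1 < γ ≤ n and p_c = n/(α+γ−2). Suppose a nonnegative mild solution ρ(·,t) with conserved mass M = ∫ρ₀ dx satisfies the moment differential inequality D^β ω(t) ≤ C₀ M − C₁ M^{2p} / (M² + 2M ω(t))^{p−1} with p > 1, C₀, C₁ > 0, where ω(t) = ∫ φ(x) ρ(x,t) dx ≥ 0. If C₂ := C₀M − C₁ M^{2p}/(M² + 2Mω(0))^{p−1} < 0, then ω(t) < ω(0) + C₂ t^β / Γ(β) for all t in the interval of existence, and hence ω reaches zero in finite time, forcing finite-time blowup whenever M > 0. -/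
open MeasureTheory intervalIntegral

private lemma mem_closure_diff_null16 {a b : ℝ} (hab : a < b) {N : Set ℝ}
    (hN : volume N = 0) : b ∈ closure (Set.Ioo a b \ N) := by
  rw [Metric.mem_closure_iff]
  intro ε hε
  have hcb : max a (b - ε) < b := max_lt hab (by linarith)
  have hne : (Set.Ioo (max a (b - ε)) b \ N).Nonempty := by
    by_contra h
    rw [Set.not_nonempty_iff_eq_empty, Set.diff_eq_empty] at h
    have h1 : volume (Set.Ioo (max a (b - ε)) b) = 0 :=
      le_antisymm (hN ▸ measure_mono h) zero_le
    rw [Real.volume_Ioo, ENNReal.ofReal_eq_zero] at h1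
    linarith
  obtain ⟨x, hx1, hx2⟩ := hne
  refine ⟨x, ⟨⟨lt_of_le_of_lt (le_max_left _ _) hx1.1, hx1.2⟩, hx2⟩, ?_⟩
  rw [Real.dist_eq, abs_sub_lt_iff]
  have h3 : b - ε ≤ max a (b - ε) := le_max_right _ _
  constructor <;> linarith [hx1.1, hx1.2]

private lemma le_of_ae_le16 {T : ℝ} {N : Set ℝ} (hN : volume N = 0)
    {ω g : ℝ → ℝ} (hωc : ContinuousOn ω (Set.Icc 0 T)) (hgc : ContinuousOn g (Set.Icc 0 T))
    {t : ℝ} (ht : t ∈ Set.Icc 0 T) (h0 : ω 0 ≤ g 0)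
    (hbd : ∀ s ∈ Set.Ioo (0 : ℝ) t, s ∉ N → ω s ≤ g s) :
    ω t ≤ g t := by
  rcases eq_or_lt_of_le ht.1 with h | h
  · rw [← h]; exact h0
  · have hcl : t ∈ closure (Set.Ioo 0 t \ N) := mem_closure_diff_null16 h hN
    have hsub : Set.Ioo 0 t \ N ⊆ Set.Icc 0 T := fun x hx =>
      ⟨le_of_lt hx.1.1, le_trans (le_of_lt hx.1.2) ht.2⟩
    have : Filter.NeBot (nhdsWithin t (Set.Ioo 0 t \ N)) :=
      mem_closure_iff_nhdsWithin_neBot.1 hcl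
    refine le_of_tendsto_of_tendsto (((hωc t ht).mono hsub).tendsto)
      (((hgc t ht).mono hsub).tendsto) ?_
    filter_upwards [self_mem_nhdsWithin] with x hx
    exact hbd x hx.1 hx.2

/-- Blowup via the moment method: if the ν-moment `ω ≥ 0` of a nonnegative mass-`M`
solution satisfies the Caputo differential inequality
`D^β ω(t) ≤ C₀ M − C₁ M^{2p}/(M² + 2Mω(t))^{p−1}` (encoded by the integral form with
density `f`), and `C₂ := C₀M − C₁M^{2p}/(M² + 2Mω(0))^{p−1} < 0`, then
`ω(t) < ω(0) + C₂ t^β/Γ(β)` on the interval of existence; since `C₂ < 0` the bound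
reaches zero in finite time, forcing finite-time blowup. -/
theorem stmt16 (n : ℕ) (hn : 2 ≤ n) (β α γ : ℝ) (hβ0 : 0 < β) (hβ1 : β < 1)
    (hα1 : 1 < α) (hα2 : α ≤ 2) (hγ1 : 1 < γ) (hγn : γ ≤ n)
    (T M p C₀ C₁ : ℝ) (hT : 0 < T) (hM : 0 < M) (hp : 1 < p)
    (hC₀ : 0 < C₀) (hC₁ : 0 < C₁)
    (ω f : ℝ → ℝ)
    (hωcont : ContinuousOn ω (Set.Icc 0 T))
    (hωpos : ∀ t ∈ Set.Icc (0 : ℝ) T, 0 ≤ ω t)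
    (hfint : IntegrableOn f (Set.Icc 0 T))
    -- the Caputo differential inequality `D^β ω ≤ C₀M − C₁M^{2p}/(M²+2Mω)^{p−1}`,
    -- in integral form:
    (hf : ∀ t ∈ Set.Icc (0 : ℝ) T,
      f t ≤ C₀ * M - C₁ * M ^ (2 * p) / (M ^ 2 + 2 * M * ω t) ^ (p - 1))
    (hω : ∀ t ∈ Set.Icc (0 : ℝ) T,
      ω t = ω 0 + (1 / Real.Gamma β) * ∫ s in (0 : ℝ)..t, (t - s) ^ (β - 1) * f s)
    (hC₂ : C₀ * M - C₁ * M ^ (2 * p) / (M ^ 2 + 2 * M * ω 0) ^ (p - 1) < 0) :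
    (∀ t ∈ Set.Ioc (0 : ℝ) T,
      ω t < ω 0 +
        (C₀ * M - C₁ * M ^ (2 * p) / (M ^ 2 + 2 * M * ω 0) ^ (p - 1)) *
          t ^ β / Real.Gamma β) ∧
    ∃ t₀ : ℝ, 0 < t₀ ∧
      ω 0 + (C₀ * M - C₁ * M ^ (2 * p) / (M ^ 2 + 2 * M * ω 0) ^ (p - 1)) *
          t₀ ^ β / Real.Gamma β ≤ 0 := by
  have hΓ : 0 < Real.Gamma β := Real.Gamma_pos_of_pos hβ0
  have hω00 : 0 ≤ ω 0 := hωpos 0 ⟨le_refl 0, hT.le⟩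
  set C2 : ℝ := C₀ * M - C₁ * M ^ (2 * p) / (M ^ 2 + 2 * M * ω 0) ^ (p - 1) with hC2def
  clear_value C2
  -- monotonicity of the right-hand side in ω
  have hfle : ∀ y : ℝ, 0 ≤ y → ∀ x ∈ Set.Icc (0 : ℝ) T, ω x ≤ y →
      f x ≤ C₀ * M - C₁ * M ^ (2 * p) / (M ^ 2 + 2 * M * y) ^ (p - 1) := by
    intro y hy x hx hxy
    refine le_trans (hf x hx) ?_
    have h1 : (0 : ℝ) < M ^ 2 + 2 * M * ω x := by nlinarith [hωpos x hx]
    have h3 : (M ^ 2 + 2 * M * ω x) ^ (p - 1) ≤ (M ^ 2 + 2 * M * y) ^ (p - 1) :=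
      Real.rpow_le_rpow h1.le (by nlinarith) (by linarith)
    have h4 : (0 : ℝ) < (M ^ 2 + 2 * M * ω x) ^ (p - 1) := Real.rpow_pos_of_pos h1 _
    have h5 : (0 : ℝ) ≤ C₁ * M ^ (2 * p) := by positivity
    exact sub_le_sub_left (div_le_div_of_nonneg_left h5 h4 h3) _
  -- choice of ε with R(ω0 + ε) ≤ C2/2
  have hεex : ∃ ε > 0,
      C₀ * M - C₁ * M ^ (2 * p) / (M ^ 2 + 2 * M * (ω 0 + ε)) ^ (p - 1) ≤ C2 / 2 := by
    have hb : (0 : ℝ) < M ^ 2 + 2 * M * (ω 0 + 0) := by nlinarith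
    have hc : ContinuousAt
        (fun y : ℝ => C₀ * M - C₁ * M ^ (2 * p) / (M ^ 2 + 2 * M * (ω 0 + y)) ^ (p - 1)) 0 := by
      have hin : ContinuousAt (fun y : ℝ => M ^ 2 + 2 * M * (ω 0 + y)) 0 := by fun_prop
      have hout : ContinuousAt (fun z : ℝ => z ^ (p - 1)) (M ^ 2 + 2 * M * (ω 0 + 0)) :=
        Real.continuousAt_rpow_const _ _ (Or.inl hb.ne')
      have hcomp : ContinuousAt
          ((fun z : ℝ => z ^ (p - 1)) ∘ fun y : ℝ => M ^ 2 + 2 * M * (ω 0 + y)) 0 :=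
        ContinuousAt.comp (g := fun z : ℝ => z ^ (p - 1))
          (f := fun y : ℝ => M ^ 2 + 2 * M * (ω 0 + y)) hout hin
      exact ContinuousAt.sub continuousAt_const
        (ContinuousAt.div continuousAt_const hcomp
          (ne_of_gt (Real.rpow_pos_of_pos hb _)))
    have h2 : C₀ * M - C₁ * M ^ (2 * p) / (M ^ 2 + 2 * M * (ω 0 + 0)) ^ (p - 1) < C2 / 2 := by
      rw [add_zero, ← hC2def]; linarith
    have h4 : ∀ᶠ y in nhds (0 : ℝ),
        C₀ * M - C₁ * M ^ (2 * p) / (M ^ 2 + 2 * M * (ω 0 + y)) ^ (p - 1) < C2 / 2 :=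
      Filter.Tendsto.eventually_lt_const h2 hc
    obtain ⟨δ, hδ, hδ'⟩ := Metric.eventually_nhds_iff.1 h4
    refine ⟨δ / 2, by linarith, le_of_lt (hδ' ?_)⟩
    rw [Real.dist_eq, sub_zero, abs_of_pos (by linarith)]; linarith
  obtain ⟨ε, hε, hεle⟩ := hεex
  -- kernel integrability and value
  have hkerInt : ∀ t : ℝ, IntervalIntegrable (fun s => (t - s) ^ (β - 1)) volume 0 t := by
    intro t
    have h := (intervalIntegrable_rpow' (a := t) (b := 0) (r := β - 1)
      (by linarith)).comp_sub_left t
    simpa using h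
  have hkerVal : ∀ t : ℝ, 0 ≤ t → (∫ s in (0 : ℝ)..t, (t - s) ^ (β - 1)) = t ^ β / β := by
    intro t ht
    rw [intervalIntegral.integral_comp_sub_left (fun u => u ^ (β - 1)) t]
    simp only [sub_zero, sub_self]
    rw [integral_rpow (Or.inl (by linarith))]
    have hb1 : β - 1 + 1 = β := by ring
    rw [hb1, Real.zero_rpow hβ0.ne']
    ring
  -- a.e. integrability of the convolution integrand
  have hcong : ∃ N : Set ℝ, volume N = 0 ∧ ∀ t ∈ Set.Ioc (0 : ℝ) T, t ∉ N →
      IntervalIntegrable (fun s => (t - s) ^ (β - 1) * f s) volume 0 t := by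
    set f₁ : ℝ → ℝ := Set.indicator (Set.Icc 0 T) f with hf₁
    set k : ℝ → ℝ := Set.indicator (Set.Ioc 0 T) (fun u => u ^ (β - 1)) with hk
    have hf₁i : Integrable f₁ volume := (integrable_indicator_iff measurableSet_Icc).2 hfint
    have hki : Integrable k volume := by
      refine (integrable_indicator_iff measurableSet_Ioc).2 ?_
      have h := intervalIntegrable_rpow' (a := 0) (b := T) (r := β - 1) (by linarith)
      rwa [intervalIntegrable_iff, Set.uIoc_of_le hT.le] at h
    have hae := hf₁i.ae_convolution_exists (L := ContinuousLinearMap.mul ℝ ℝ) hki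
    rw [ae_iff] at hae
    refine ⟨_, hae, ?_⟩
    intro t ht htN
    have hP : ConvolutionExistsAt f₁ k t (ContinuousLinearMap.mul ℝ ℝ) volume := by
      by_contra h; exact htN h
    rw [intervalIntegrable_iff, Set.uIoc_of_le ht.1.le,
      integrableOn_Ioc_iff_integrableOn_Ioo]
    have hio : IntegrableOn (fun s => (ContinuousLinearMap.mul ℝ ℝ) (f₁ s) (k (t - s)))
        (Set.Ioo 0 t) volume := hP.integrableOn
    refine hio.congr_fun ?_ measurableSet_Ioo
    intro s hs
    have hs1 : s ∈ Set.Icc (0 : ℝ) T := ⟨hs.1.le, (hs.2.le.trans ht.2)⟩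
    have hs2 : t - s ∈ Set.Ioc (0 : ℝ) T := ⟨by linarith [hs.2], by linarith [hs.1, ht.2]⟩
    simp only [hf₁, hk, Set.indicator_of_mem hs1, Set.indicator_of_mem hs2,
      ContinuousLinearMap.mul_apply']
    ring
  obtain ⟨N, hN, hIntGood⟩ := hcong
  -- the basic integral estimate at integrable points
  have hEst : ∀ K : ℝ, ∀ t ∈ Set.Ioc (0 : ℝ) T,
      IntervalIntegrable (fun s => (t - s) ^ (β - 1) * f s) volume 0 t →
      (∀ s ∈ Set.Icc 0 t, f s ≤ K) →
      ω t ≤ ω 0 + K * t ^ β / (β * Real.Gamma β) := by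
    intro K t ht hi hK
    have htT : t ∈ Set.Icc (0 : ℝ) T := ⟨ht.1.le, ht.2⟩
    rw [hω t htT]
    have h1 : (∫ s in (0 : ℝ)..t, (t - s) ^ (β - 1) * f s) ≤
        ∫ s in (0 : ℝ)..t, (t - s) ^ (β - 1) * K := by
      refine intervalIntegral.integral_mono_on ht.1.le hi ((hkerInt t).mul_const K) ?_
      intro s hs
      exact mul_le_mul_of_nonneg_left (hK s hs) (Real.rpow_nonneg (by linarith [hs.2]) _)
    have h2 : (∫ s in (0 : ℝ)..t, (t - s) ^ (β - 1) * K) = t ^ β / β * K := by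
      rw [intervalIntegral.integral_mul_const, hkerVal t ht.1.le]
    have h3 : (∫ s in (0 : ℝ)..t, (t - s) ^ (β - 1) * f s) ≤ t ^ β / β * K := h1.trans_eq h2
    have h4 : (1 / Real.Gamma β) * (∫ s in (0 : ℝ)..t, (t - s) ^ (β - 1) * f s) ≤
        (1 / Real.Gamma β) * (t ^ β / β * K) :=
      mul_le_mul_of_nonneg_left h3 (by positivity)
    have h5 : (1 / Real.Gamma β) * (t ^ β / β * K) = K * t ^ β / (β * Real.Gamma β) := by
      field_simp
    linarith [h4, h5.symm ▸ h4]
  -- continuity of the bound functions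
  have hrpowc : ContinuousOn (fun x : ℝ => x ^ β) (Set.Icc 0 T) := fun x _ =>
    (Real.continuousAt_rpow_const x β (Or.inr hβ0.le)).continuousWithinAt
  have hgc : ∀ K : ℝ, ContinuousOn (fun x : ℝ => ω 0 + K * x ^ β / (β * Real.Gamma β))
      (Set.Icc 0 T) := fun K =>
    continuousOn_const.add ((continuousOn_const.mul hrpowc).div_const _)
  -- the claim: an a.e. bound extended by continuity
  have hClaim : ∀ K : ℝ, ∀ t ∈ Set.Icc (0 : ℝ) T,
      (∀ s ∈ Set.Icc 0 t, f s ≤ K) →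
      ω t ≤ ω 0 + K * t ^ β / (β * Real.Gamma β) := by
    intro K t ht hfK
    refine le_of_ae_le16 hN hωcont (hgc K) ht ?_ ?_
    · rw [Real.zero_rpow hβ0.ne']
      simp
    · intro s hs hsN
      refine hEst K s ⟨hs.1, hs.2.le.trans ht.2⟩ (hIntGood s ⟨hs.1, hs.2.le.trans ht.2⟩ hsN)
        (fun u hu => hfK u ⟨hu.1, hu.2.trans hs.2.le⟩)
  have hnonpos : ∀ K : ℝ, K ≤ 0 → ∀ t : ℝ, 0 ≤ t → K * t ^ β / (β * Real.Gamma β) ≤ 0 := by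
    intro K hK t ht
    have h1 : K * t ^ β ≤ 0 := mul_nonpos_iff.2 (Or.inr ⟨hK, Real.rpow_nonneg ht _⟩)
    exact div_nonpos_iff.2 (Or.inr ⟨h1, by positivity⟩)
  -- bootstrap: ω ≤ ω0 + ε on [0,T]
  have hωbound : ∀ s ∈ Set.Icc (0 : ℝ) T, ω s ≤ ω 0 + ε := by
    set A : Set ℝ := {t | t ∈ Set.Icc (0 : ℝ) T ∧ ∀ s ∈ Set.Icc 0 t, ω s ≤ ω 0 + ε} with hA
    have h0A : (0 : ℝ) ∈ A := by
      refine ⟨⟨le_refl 0, hT.le⟩, fun s hs => ?_⟩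
      have hs0 : s = 0 := le_antisymm hs.2 hs.1
      rw [hs0]; linarith
    have hbdd : BddAbove A := ⟨T, fun x hx => hx.1.2⟩
    set t₁ := sSup A with ht₁
    have h0t₁ : 0 ≤ t₁ := le_csSup hbdd h0A
    have ht₁T : t₁ ≤ T := csSup_le ⟨0, h0A⟩ fun x hx => hx.1.2
    have ht₁mem : t₁ ∈ Set.Icc (0 : ℝ) T := ⟨h0t₁, ht₁T⟩
    have hlt : ∀ s : ℝ, 0 ≤ s → s < t₁ → ω s ≤ ω 0 + ε := by
      intro s hs0 hst
      obtain ⟨a, haA, has⟩ := exists_lt_of_lt_csSup ⟨0, h0A⟩ hst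
      exact haA.2 s ⟨hs0, has.le⟩
    have ht₁le : ∀ s ∈ Set.Icc (0 : ℝ) t₁, ω s ≤ ω 0 + ε := by
      intro s hs
      rcases lt_or_eq_of_le hs.2 with h | h
      · exact hlt s hs.1 h
      · rw [h]
        refine le_of_ae_le16 (N := ∅) (by simp) hωcont continuousOn_const ht₁mem
          (by linarith) ?_
        intro u hu _
        exact hlt u hu.1.le hu.2
    have ht₁A : t₁ ∈ A := ⟨ht₁mem, ht₁le⟩
    have hfK : ∀ s ∈ Set.Icc (0 : ℝ) t₁, f s ≤ C2 / 2 := by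
      intro s hs
      have hsT : s ∈ Set.Icc (0 : ℝ) T := ⟨hs.1, hs.2.trans ht₁T⟩
      exact le_trans (hfle (ω 0 + ε) (by linarith) s hsT (ht₁le s hs)) hεle
    have ht₁lt : ω t₁ < ω 0 + ε := by
      have h1 := hClaim (C2 / 2) t₁ ht₁mem hfK
      have h2 := hnonpos (C2 / 2) (by linarith) t₁ h0t₁
      linarith
    have hTt₁ : t₁ = T := by
      by_contra hne
      have hlt' : t₁ < T := lt_of_le_of_ne ht₁T hne
      have hev : {x | ω x < ω 0 + ε} ∈ nhdsWithin t₁ (Set.Icc 0 T) :=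
        Filter.eventually_iff.1
          (Filter.Tendsto.eventually_lt_const ht₁lt (hωcont t₁ ht₁mem))
      obtain ⟨δ, hδ, hball⟩ := Metric.mem_nhdsWithin_iff.1 hev
      have ht'A : min T (t₁ + δ / 2) ∈ A := by
        refine ⟨⟨le_min hT.le (by linarith), min_le_left _ _⟩, ?_⟩
        intro s hs
        rcases le_or_gt s t₁ with h | h
        · exact ht₁le s ⟨hs.1, h⟩
        · have hsT : s ∈ Set.Icc (0 : ℝ) T := ⟨hs.1, hs.2.trans (min_le_left _ _)⟩
          have hsb : s ∈ Metric.ball t₁ δ := by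
            rw [Metric.mem_ball, Real.dist_eq, abs_of_pos (by linarith)]
            have h2 : s ≤ t₁ + δ / 2 := hs.2.trans (min_le_right _ _)
            linarith
          exact (hball ⟨hsb, hsT⟩).le
      have h3 := le_csSup hbdd ht'A
      rw [← ht₁] at h3
      have h2 : t₁ < min T (t₁ + δ / 2) := lt_min hlt' (by linarith)
      linarith
    intro s hs
    exact ht₁le s ⟨hs.1, hTt₁ ▸ hs.2⟩
  -- now ω ≤ ω0 on [0,T]
  have hωle : ∀ t ∈ Set.Icc (0 : ℝ) T, ω t ≤ ω 0 := by
    intro t ht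
    have h1 := hClaim (C2 / 2) t ht (fun s hs =>
      le_trans (hfle (ω 0 + ε) (by linarith) s ⟨hs.1, hs.2.trans ht.2⟩
        (hωbound s ⟨hs.1, hs.2.trans ht.2⟩)) hεle)
    have h2 := hnonpos (C2 / 2) (by linarith) t ht.1
    linarith
  have hfC2 : ∀ s ∈ Set.Icc (0 : ℝ) T, f s ≤ C2 := by
    intro s hs
    have h := hfle (ω 0) hω00 s hs (hωle s hs)
    rwa [← hC2def] at h
  constructor
  · intro t ht
    have h1 := hClaim C2 t ⟨ht.1.le, ht.2⟩ (fun s hs => hfC2 s ⟨hs.1, hs.2.trans ht.2⟩)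
    have htβ : 0 < t ^ β := Real.rpow_pos_of_pos ht.1 _
    have h2 : C2 * t ^ β < 0 := mul_neg_of_neg_of_pos hC₂ htβ
    have h3 : C2 * t ^ β / (β * Real.Gamma β) < C2 * t ^ β / Real.Gamma β := by
      rw [div_lt_div_iff₀ (by positivity) hΓ]
      nlinarith [mul_pos (mul_pos (neg_pos.2 h2) hΓ) (sub_pos.2 hβ1)]
    linarith
  · have hnC2 : (0 : ℝ) < -C2 := neg_pos.2 hC₂
    have hbase : (0 : ℝ) < ω 0 * Real.Gamma β / (-C2) + 1 := by
      have := div_nonneg (mul_nonneg hω00 hΓ.le) hnC2.le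
      linarith
    refine ⟨(ω 0 * Real.Gamma β / (-C2) + 1) ^ (1 / β), Real.rpow_pos_of_pos hbase _, ?_⟩
    have hpow : ((ω 0 * Real.Gamma β / (-C2) + 1) ^ (1 / β)) ^ β
        = ω 0 * Real.Gamma β / (-C2) + 1 := by
      rw [← Real.rpow_mul hbase.le, one_div, inv_mul_cancel₀ hβ0.ne', Real.rpow_one]
    rw [hpow]
    have hC2ne : C2 ≠ 0 := ne_of_lt hC₂
    have heq : ω 0 + C2 * (ω 0 * Real.Gamma β / (-C2) + 1) / Real.Gamma β
        = C2 / Real.Gamma β := by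
      field_simp [hC2ne, hΓ.ne']
      ring
    rw [heq]
    exact le_of_lt (div_neg_of_neg_of_pos hC₂ hΓ)
end

section
/- Let 0 < β < 1 and σ ∈ [0, α] with 1 < α ≤ 2. Assume the bound |E_β(−s)| ≤ C/(1+s) for s ≥ 0. Then for u ∈ L²(ℝⁿ) and t > 0, the operator S(t) defined by (S(t)u)^(ξ) = E_β(−t^β|ξ|^α) û(ξ) satisfies ‖S(t)u‖_{H^{σ,2}}² = ∫ (1+|ξ|^{2σ}) E_β(−t^β|ξ|^α)² |û(ξ)|² dξ ≤ C t^{−2σβ/α} ‖u‖₂² for 0 < t ≤ T. -/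
open MeasureTheory FourierTransform
open Real Complex
open scoped RealInnerProductSpace

private abbrev Vsp (n : ℕ) := EuclideanSpace ℝ (Fin n)

private lemma gauss_plancherel_aux {n : ℕ} (f : Vsp n → ℂ)
    (hf1 : Integrable f volume) (hf2 : Integrable (fun x => ‖f x‖ ^ 2) volume)
    {δ : ℝ} (hδ : 0 < δ) :
    ∫ ξ : Vsp n, Real.exp (-δ * ‖ξ‖ ^ 2) * ‖𝓕 f ξ‖ ^ 2 ≤
      ∫ x, ‖f x‖ ^ 2 := by
  have hπ : (0:ℝ) < π := Real.pi_pos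
  -- the Fourier transform of the Gaussian
  set G : Vsp n → ℝ := fun w => (π / δ) ^ ((n : ℝ) / 2) * Real.exp (-π ^ 2 * ‖w‖ ^ 2 / δ)
    with hGdef
  have hG0 : ∀ w, 0 ≤ G w := fun w => by positivity
  have hGc : Continuous G := by fun_prop
  -- integrability of real gaussians
  have hgauss_int : ∀ b : ℝ, 0 < b → Integrable (fun w : Vsp n => Real.exp (-b * ‖w‖ ^ 2)) volume := by
    intro b hb
    have h := (GaussianFourier.integrable_cexp_neg_mul_sq_norm_add (V := Vsp n)
      (b := (b : ℂ)) (by simpa using hb) 0 0).norm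
    have heq : (fun a : Vsp n => ‖cexp (-(b:ℂ) * (‖a‖:ℂ) ^ 2 + 0 * ((inner ℝ (0 : Vsp n) a : ℝ) : ℂ))‖)
        = fun a : Vsp n => Real.exp (-b * ‖a‖ ^ 2) := by
      funext a
      rw [Complex.norm_exp]
      congr 1
      rw [zero_mul, add_zero, ← Complex.ofReal_pow, ← Complex.ofReal_neg,
        ← Complex.ofReal_mul, Complex.ofReal_re]
    rwa [heq] at h
  have hGint : Integrable G volume := by
    apply Integrable.const_mul
    have h : ∀ w : Vsp n, Real.exp (-π ^ 2 * ‖w‖ ^ 2 / δ) = Real.exp (-(π ^ 2 / δ) * ‖w‖ ^ 2) := by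
      intro w; ring_nf
    simpa only [h] using hgauss_int (π ^ 2 / δ) (by positivity)
  -- value of the Fourier transform of the Gaussian
  have hGval : ∀ w : Vsp n, 𝓕 (fun v : Vsp n => Complex.exp (-(δ : ℂ) * ‖v‖ ^ 2)) w = (G w : ℂ) := by
    intro w
    rw [fourier_gaussian_innerProductSpace (by simpa using hδ) w]
    have hfr : Module.finrank ℝ (Vsp n) = n := finrank_euclideanSpace_fin
    rw [hfr]
    have h1 : ((π : ℂ) / (δ : ℂ)) ^ ((n : ℂ) / 2) = (((π / δ) ^ ((n:ℝ)/2) : ℝ) : ℂ) := by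
      rw [Complex.ofReal_cpow (by positivity)]
      push_cast
      norm_num
    have h2 : Complex.exp (-(π:ℂ) ^ 2 * (‖w‖:ℂ) ^ 2 / (δ:ℂ))
        = ((Real.exp (-π ^ 2 * ‖w‖ ^ 2 / δ) : ℝ) : ℂ) := by
      rw [Complex.ofReal_exp]
      push_cast
      ring_nf
    rw [h1, h2, hGdef]
    push_cast
    ring
  -- total mass of G is 1
  have hGsum : ∫ w : Vsp n, G w = 1 := by
    rw [hGdef]
    simp only
    rw [integral_const_mul]
    have h : ∀ w : Vsp n, Real.exp (-π ^ 2 * ‖w‖ ^ 2 / δ) = Real.exp (-(π ^ 2 / δ) * ‖w‖ ^ 2) := by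
      intro w; ring_nf
    simp only [h]
    rw [GaussianFourier.integral_rexp_neg_mul_sq_norm (by positivity)]
    have hfr : Module.finrank ℝ (Vsp n) = n := finrank_euclideanSpace_fin
    rw [hfr]
    rw [← Real.mul_rpow (by positivity) (by positivity)]
    rw [show (π / δ) * (π / (π ^ 2 / δ)) = 1 by field_simp]
    exact Real.one_rpow _

  -- complex gaussian weight
  set g : Vsp n → ℂ := fun ξ => Complex.exp (-(δ:ℂ) * ‖ξ‖ ^ 2) with hgdef
  -- coupled integrand
  set Φ : Vsp n → (Vsp n × Vsp n) → ℂ := fun ξ p =>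
    g ξ * ((Complex.exp ((↑(-2 * π * ⟪p.1, ξ⟫) : ℂ) * Complex.I) * f p.1) *
      (starRingEnd ℂ) (Complex.exp ((↑(-2 * π * ⟪p.2, ξ⟫) : ℂ) * Complex.I) * f p.2)) with hΦdef
  have key1 : ∀ ξ, g ξ * (𝓕 f ξ * (starRingEnd ℂ) (𝓕 f ξ)) = ∫ p : Vsp n × Vsp n, Φ ξ p := by
    intro ξ
    rw [Real.fourier_eq']
    simp_rw [smul_eq_mul]
    rw [← integral_conj, ← integral_prod_mul, ← integral_const_mul, Measure.volume_eq_prod]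
  -- integrability of the full integrand
  have hnormΦ : ∀ q : Vsp n × (Vsp n × Vsp n),
      ‖Φ q.1 q.2‖ = Real.exp (-δ * ‖q.1‖ ^ 2) * (‖f q.2.1‖ * ‖f q.2.2‖) := by
    intro q
    have h1 : ((↑(-2 * π * ⟪q.2.1, q.1⟫) : ℂ) * Complex.I).re = 0 := by simp
    have h2 : ((↑(-2 * π * ⟪q.2.2, q.1⟫) : ℂ) * Complex.I).re = 0 := by simp
    have h3 : (-(δ:ℂ) * (‖q.1‖:ℂ) ^ 2).re = -δ * ‖q.1‖ ^ 2 := by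
      rw [show (-(δ:ℂ) * (‖q.1‖:ℂ) ^ 2) = ((-δ * ‖q.1‖ ^ 2 : ℝ) : ℂ) by push_cast; ring,
        Complex.ofReal_re]
    rw [hΦdef]
    simp only [hgdef, norm_mul, map_mul, Complex.norm_conj,
      Complex.norm_exp, h1, h2, h3, Real.exp_zero]
    ring
  have qmp1 : Measure.QuasiMeasurePreserving (fun q : Vsp n × (Vsp n × Vsp n) => q.2.1)
      volume volume := by
    rw [Measure.volume_eq_prod]
    exact Measure.quasiMeasurePreserving_fst.comp
      (by rw [Measure.volume_eq_prod (α := Vsp n)]; exact Measure.quasiMeasurePreserving_snd)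
  have qmp2 : Measure.QuasiMeasurePreserving (fun q : Vsp n × (Vsp n × Vsp n) => q.2.2)
      volume volume := by
    rw [Measure.volume_eq_prod]
    exact Measure.quasiMeasurePreserving_snd.comp
      (by rw [Measure.volume_eq_prod (α := Vsp n)]; exact Measure.quasiMeasurePreserving_snd)
  have hc1 : Continuous fun a : Vsp n × (Vsp n × Vsp n) =>
      ((-2 * π * ⟪a.2.1, a.1⟫ : ℝ) : ℂ) * Complex.I :=
    (Complex.continuous_ofReal.comp
      (continuous_const.mul ((continuous_fst.comp continuous_snd).inner continuous_fst))).mul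
      continuous_const
  have hc2 : Continuous fun a : Vsp n × (Vsp n × Vsp n) =>
      ((-2 * π * ⟪a.2.2, a.1⟫ : ℝ) : ℂ) * Complex.I :=
    (Complex.continuous_ofReal.comp
      (continuous_const.mul ((continuous_snd.comp continuous_snd).inner continuous_fst))).mul
      continuous_const
  have hΦmeas : AEStronglyMeasurable (Function.uncurry Φ)
      (volume : Measure (Vsp n × (Vsp n × Vsp n))) := by
    rw [hΦdef]
    simp only [hgdef]
    apply AEStronglyMeasurable.mul
    · exact (Complex.continuous_exp.comp (by fun_prop)).aestronglyMeasurable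
    · apply AEStronglyMeasurable.mul
      · exact ((Complex.continuous_exp.comp hc1).aestronglyMeasurable).mul
          (hf1.1.comp_quasiMeasurePreserving qmp1)
      · exact RCLike.continuous_conj.comp_aestronglyMeasurable
          (((Complex.continuous_exp.comp hc2).aestronglyMeasurable).mul
            (hf1.1.comp_quasiMeasurePreserving qmp2))
  have hΦint : Integrable (Function.uncurry Φ)
      (volume : Measure (Vsp n × (Vsp n × Vsp n))) := by
    apply Integrable.mono' ?_ hΦmeas
    · exact ae_of_all _ fun q => le_of_eq (hnormΦ q)
    · rw [Measure.volume_eq_prod]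
      have hinner : Integrable (fun p : Vsp n × Vsp n => ‖f p.1‖ * ‖f p.2‖)
          (volume : Measure (Vsp n × Vsp n)) := by
        rw [Measure.volume_eq_prod]
        exact hf1.norm.mul_prod hf1.norm
      exact Integrable.mul_prod (L := ℝ) (hgauss_int δ hδ)
        (g := fun p : Vsp n × Vsp n => ‖f p.1‖ * ‖f p.2‖) hinner
  -- swap the order of integration
  have hswap : ∫ ξ, (∫ p : Vsp n × Vsp n, Φ ξ p) = ∫ p : Vsp n × Vsp n, (∫ ξ, Φ ξ p) := by
    rw [Measure.volume_eq_prod] at hΦint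
    have := MeasureTheory.integral_integral_swap (μ := (volume : Measure (Vsp n)))
      (ν := (volume : Measure (Vsp n × Vsp n))) (f := Φ) hΦint
    simpa using this
  -- compute the inner integral
  have key2 : ∀ p : Vsp n × Vsp n,
      (∫ ξ, Φ ξ p) = f p.1 * (starRingEnd ℂ) (f p.2) * ((G (p.1 - p.2) : ℝ) : ℂ) := by
    intro p
    have hptw : ∀ ξ, Φ ξ p = (f p.1 * (starRingEnd ℂ) (f p.2)) *
        (Complex.exp ((↑(-2 * π * ⟪ξ, p.1 - p.2⟫) : ℂ) * Complex.I) * g ξ) := by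
      intro ξ
      rw [hΦdef]
      simp only [map_mul]
      rw [← Complex.exp_conj]
      have hconj : (starRingEnd ℂ) ((↑(-2 * π * ⟪p.2, ξ⟫) : ℂ) * Complex.I)
          = (↑(2 * π * ⟪p.2, ξ⟫) : ℂ) * Complex.I := by
        rw [map_mul, Complex.conj_I, Complex.conj_ofReal]
        push_cast
        try ring
      rw [hconj]
      have hinner : (↑(-2 * π * ⟪ξ, p.1 - p.2⟫) : ℂ) * Complex.I
          = (↑(-2 * π * ⟪p.1, ξ⟫) : ℂ) * Complex.I + (↑(2 * π * ⟪p.2, ξ⟫) : ℂ) * Complex.I := by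
        rw [inner_sub_right, real_inner_comm ξ p.1, real_inner_comm ξ p.2]
        push_cast
        try ring
      rw [hinner, Complex.exp_add]
      ring
    rw [integral_congr_ae (ae_of_all _ hptw), integral_const_mul]
    congr 1
    have : (∫ ξ, Complex.exp ((↑(-2 * π * ⟪ξ, p.1 - p.2⟫) : ℂ) * Complex.I) * g ξ)
        = 𝓕 (fun v : Vsp n => Complex.exp (-(δ:ℂ) * ‖v‖ ^ 2)) (p.1 - p.2) := by
      rw [Real.fourier_eq']
      simp_rw [smul_eq_mul]
      rfl
    rw [this, hGval]
  -- the main identity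
  have hptw2 : ∀ ξ : Vsp n, ((Real.exp (-δ * ‖ξ‖ ^ 2) * ‖𝓕 f ξ‖ ^ 2 : ℝ) : ℂ)
      = g ξ * (𝓕 f ξ * (starRingEnd ℂ) (𝓕 f ξ)) := by
    intro ξ
    rw [Complex.mul_conj']
    simp only [hgdef]
    rw [show -(δ:ℂ) * (‖ξ‖:ℂ) ^ 2 = ((-δ * ‖ξ‖ ^ 2 : ℝ) : ℂ) by push_cast; ring,
      ← Complex.ofReal_exp]
    push_cast
    try ring
  have hmain : ((∫ ξ : Vsp n, Real.exp (-δ * ‖ξ‖ ^ 2) * ‖𝓕 f ξ‖ ^ 2 : ℝ) : ℂ)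
      = ∫ p : Vsp n × Vsp n, f p.1 * (starRingEnd ℂ) (f p.2) * ((G (p.1 - p.2) : ℝ) : ℂ) := by
    calc ((∫ ξ : Vsp n, Real.exp (-δ * ‖ξ‖ ^ 2) * ‖𝓕 f ξ‖ ^ 2 : ℝ) : ℂ)
        = ∫ ξ : Vsp n, ((Real.exp (-δ * ‖ξ‖ ^ 2) * ‖𝓕 f ξ‖ ^ 2 : ℝ) : ℂ) := integral_ofReal.symm
      _ = ∫ ξ : Vsp n, g ξ * (𝓕 f ξ * (starRingEnd ℂ) (𝓕 f ξ)) :=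
          integral_congr_ae (ae_of_all _ hptw2)
      _ = ∫ ξ : Vsp n, ∫ p : Vsp n × Vsp n, Φ ξ p := integral_congr_ae (ae_of_all _ key1)
      _ = ∫ p : Vsp n × Vsp n, ∫ ξ, Φ ξ p := hswap
      _ = ∫ p : Vsp n × Vsp n, f p.1 * (starRingEnd ℂ) (f p.2) * ((G (p.1 - p.2) : ℝ) : ℂ) :=
          integral_congr_ae (ae_of_all _ key2)
  -- now the estimate
  set N : Vsp n × Vsp n → ℝ := fun p => ‖f p.1‖ * ‖f p.2‖ * G (p.1 - p.2) with hNdef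
  have hNmeas : AEStronglyMeasurable N (volume : Measure (Vsp n × Vsp n)) := by
    rw [hNdef]
    apply AEStronglyMeasurable.mul
    · apply AEStronglyMeasurable.mul
      · exact (hf1.1.norm).comp_quasiMeasurePreserving
          (by rw [Measure.volume_eq_prod]; exact Measure.quasiMeasurePreserving_fst)
      · exact (hf1.1.norm).comp_quasiMeasurePreserving
          (by rw [Measure.volume_eq_prod]; exact Measure.quasiMeasurePreserving_snd)
    · exact (hGc.comp (continuous_fst.sub continuous_snd)).aestronglyMeasurable
  have hN0 : ∀ p, 0 ≤ N p := fun p => by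
    rw [hNdef]
    have := hG0 (p.1 - p.2)
    positivity
  have step1 : (∫ ξ : Vsp n, Real.exp (-δ * ‖ξ‖ ^ 2) * ‖𝓕 f ξ‖ ^ 2)
      ≤ ∫ p : Vsp n × Vsp n, N p := by
    have h1 : (∫ ξ : Vsp n, Real.exp (-δ * ‖ξ‖ ^ 2) * ‖𝓕 f ξ‖ ^ 2)
        = (((∫ ξ : Vsp n, Real.exp (-δ * ‖ξ‖ ^ 2) * ‖𝓕 f ξ‖ ^ 2 : ℝ) : ℂ)).re :=
      (Complex.ofReal_re _).symm
    rw [h1, hmain]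
    refine le_trans (Complex.re_le_norm _) ?_
    refine le_trans (norm_integral_le_integral_norm _) ?_
    apply le_of_eq
    apply integral_congr_ae (ae_of_all _ fun p => ?_)
    rw [hNdef]
    simp only [norm_mul, Complex.norm_conj, Complex.norm_real, Real.norm_eq_abs]
    rw [_root_.abs_of_nonneg (hG0 _)]
  -- bound ∫ N via the lintegral
  have hfx2 : ∀ x : Vsp n, (0:ℝ) ≤ ‖f x‖ ^ 2 := fun x => sq_nonneg _
  set B : ENNReal := ∫⁻ p : Vsp n × Vsp n, ENNReal.ofReal (N p) with hBdef
  have hNaem : AEMeasurable (fun p : Vsp n × Vsp n => ENNReal.ofReal (N p)) volume :=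
    (hNmeas.aemeasurable).ennreal_ofReal
  have hM1aem : AEMeasurable
      (fun p : Vsp n × Vsp n => ENNReal.ofReal (‖f p.1‖ ^ 2 * G (p.1 - p.2))) volume := by
    apply AEMeasurable.ennreal_ofReal
    apply AEMeasurable.mul
    · exact (((hf1.1.norm).comp_quasiMeasurePreserving
        (by rw [Measure.volume_eq_prod]; exact Measure.quasiMeasurePreserving_fst))).aemeasurable.pow_const 2
    · exact ((hGc.comp (continuous_fst.sub continuous_snd)).aestronglyMeasurable).aemeasurable
  have hM2aem : AEMeasurable
      (fun p : Vsp n × Vsp n => ENNReal.ofReal (‖f p.2‖ ^ 2 * G (p.1 - p.2))) volume := by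
    apply AEMeasurable.ennreal_ofReal
    apply AEMeasurable.mul
    · exact (((hf1.1.norm).comp_quasiMeasurePreserving
        (by rw [Measure.volume_eq_prod]; exact Measure.quasiMeasurePreserving_snd))).aemeasurable.pow_const 2
    · exact ((hGc.comp (continuous_fst.sub continuous_snd)).aestronglyMeasurable).aemeasurable
  have hGlint : ∀ x : Vsp n, (∫⁻ y : Vsp n, ENNReal.ofReal (G (x - y))) = 1 := by
    intro x
    have hmp : MeasurePreserving (fun y : Vsp n => x - y) volume volume := by
      have := (measurePreserving_add_left (volume : Measure (Vsp n)) x).comp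
        (Measure.measurePreserving_neg (volume : Measure (Vsp n)))
      simpa [Function.comp_def, sub_eq_add_neg] using this
    have h := hmp.lintegral_comp (f := fun y : Vsp n => ENNReal.ofReal (G y))
      (ENNReal.measurable_ofReal.comp hGc.measurable)
    rw [← ofReal_integral_eq_lintegral_ofReal hGint (ae_of_all _ hG0), hGsum] at h
    simpa using h
  have hGlint' : ∀ y : Vsp n, (∫⁻ x : Vsp n, ENNReal.ofReal (G (x - y))) = 1 := by
    intro y
    have hmp : MeasurePreserving (fun x : Vsp n => x - y) volume volume :=
      measurePreserving_sub_right volume y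
    have h := hmp.lintegral_comp (f := fun x : Vsp n => ENNReal.ofReal (G x))
      (ENNReal.measurable_ofReal.comp hGc.measurable)
    rw [← ofReal_integral_eq_lintegral_ofReal hGint (ae_of_all _ hG0), hGsum] at h
    simpa using h
  have hM1 : (∫⁻ p : Vsp n × Vsp n, ENNReal.ofReal (‖f p.1‖ ^ 2 * G (p.1 - p.2)))
      = ENNReal.ofReal (∫ x, ‖f x‖ ^ 2) := by
    rw [Measure.volume_eq_prod] at hM1aem ⊢
    rw [MeasureTheory.lintegral_prod _ hM1aem]
    have : ∀ x : Vsp n, (∫⁻ y : Vsp n, ENNReal.ofReal (‖f x‖ ^ 2 * G (x - y)))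
        = ENNReal.ofReal (‖f x‖ ^ 2) := by
      intro x
      simp_rw [ENNReal.ofReal_mul (hfx2 x)]
      rw [lintegral_const_mul' _ _ ENNReal.ofReal_ne_top, hGlint x, mul_one]
    simp_rw [this]
    rw [← ofReal_integral_eq_lintegral_ofReal hf2 (ae_of_all _ hfx2)]
  have hM2 : (∫⁻ p : Vsp n × Vsp n, ENNReal.ofReal (‖f p.2‖ ^ 2 * G (p.1 - p.2)))
      = ENNReal.ofReal (∫ x, ‖f x‖ ^ 2) := by
    rw [Measure.volume_eq_prod] at hM2aem ⊢
    rw [MeasureTheory.lintegral_prod_symm _ hM2aem]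
    have : ∀ y : Vsp n, (∫⁻ x : Vsp n, ENNReal.ofReal (‖f y‖ ^ 2 * G (x - y)))
        = ENNReal.ofReal (‖f y‖ ^ 2) := by
      intro y
      simp_rw [ENNReal.ofReal_mul (hfx2 y)]
      rw [lintegral_const_mul' _ _ ENNReal.ofReal_ne_top, hGlint' y, mul_one]
    simp_rw [this]
    rw [← ofReal_integral_eq_lintegral_ofReal hf2 (ae_of_all _ hfx2)]
  have hB : B ≤ ENNReal.ofReal (∫ x, ‖f x‖ ^ 2) := by
    have h2B : 2 * B ≤ 2 * ENNReal.ofReal (∫ x, ‖f x‖ ^ 2) := by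
      calc 2 * B = ∫⁻ p : Vsp n × Vsp n, 2 * ENNReal.ofReal (N p) := by
            rw [lintegral_const_mul' _ _ (by norm_num), hBdef]
        _ ≤ ∫⁻ p : Vsp n × Vsp n, (ENNReal.ofReal (‖f p.1‖ ^ 2 * G (p.1 - p.2))
              + ENNReal.ofReal (‖f p.2‖ ^ 2 * G (p.1 - p.2))) := by
            apply lintegral_mono
            intro p
            have hr : 2 * N p ≤ ‖f p.1‖ ^ 2 * G (p.1 - p.2) + ‖f p.2‖ ^ 2 * G (p.1 - p.2) := by
              simp only [hNdef]
              have h2ab := two_mul_le_add_sq ‖f p.1‖ ‖f p.2‖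
              have hg := hG0 (p.1 - p.2)
              nlinarith [mul_nonneg (sub_nonneg.mpr h2ab) hg]
            calc 2 * ENNReal.ofReal (N p) = ENNReal.ofReal (2 * N p) := by
                  rw [ENNReal.ofReal_mul (by norm_num : (0:ℝ) ≤ 2)]
                  norm_num
              _ ≤ ENNReal.ofReal (‖f p.1‖ ^ 2 * G (p.1 - p.2) + ‖f p.2‖ ^ 2 * G (p.1 - p.2)) :=
                  ENNReal.ofReal_le_ofReal hr
              _ ≤ _ := ENNReal.ofReal_add_le
        _ = ENNReal.ofReal (∫ x, ‖f x‖ ^ 2) + ENNReal.ofReal (∫ x, ‖f x‖ ^ 2) := by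
            rw [lintegral_add_left' hM1aem, hM1, hM2]
        _ = 2 * ENNReal.ofReal (∫ x, ‖f x‖ ^ 2) := by ring
    exact (ENNReal.mul_le_mul_iff_right (by norm_num) (by norm_num)).mp h2B
  have step2 : (∫ p : Vsp n × Vsp n, N p) ≤ ∫ x, ‖f x‖ ^ 2 := by
    rw [integral_eq_lintegral_of_nonneg_ae (ae_of_all _ hN0) hNmeas]
    exact ENNReal.toReal_le_of_le_ofReal (integral_nonneg hfx2) hB
  exact le_trans step1 step2


private lemma gauss_int_real {n : ℕ} {b : ℝ} (hb : 0 < b) :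
    Integrable (fun w : Vsp n => Real.exp (-b * ‖w‖ ^ 2)) volume := by
  have h := (GaussianFourier.integrable_cexp_neg_mul_sq_norm_add (V := Vsp n)
    (b := (b : ℂ)) (by simpa using hb) 0 0).norm
  have heq : (fun a : Vsp n => ‖cexp (-(b:ℂ) * (‖a‖:ℂ) ^ 2 + 0 * ((inner ℝ (0 : Vsp n) a : ℝ) : ℂ))‖)
      = fun a : Vsp n => Real.exp (-b * ‖a‖ ^ 2) := by
    funext a
    rw [Complex.norm_exp]
    congr 1
    rw [zero_mul, add_zero, ← Complex.ofReal_pow, ← Complex.ofReal_neg,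
      ← Complex.ofReal_mul, Complex.ofReal_re]
  rwa [heq] at h

private lemma plancherel_le {n : ℕ} (f : Vsp n → ℂ) (hf1 : Integrable f volume)
    (hf2 : Integrable (fun x => ‖f x‖ ^ 2) volume) :
    (∫⁻ ξ : Vsp n, ENNReal.ofReal (‖𝓕 f ξ‖ ^ 2)) ≤ ENNReal.ofReal (∫ x, ‖f x‖ ^ 2) := by
  have h𝓕c : Continuous (𝓕 f) :=
    VectorFourier.fourierIntegral_continuous Real.continuous_fourierChar
      (by exact continuous_inner) hf1
  have hbound : ∀ ξ : Vsp n, ‖𝓕 f ξ‖ ≤ ∫ x, ‖f x‖ := fun ξ =>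
    VectorFourier.norm_fourierIntegral_le_integral_norm _ _ _ _ _
  -- integrability of the gaussian-damped square
  have hgk : ∀ δ : ℝ, 0 < δ →
      Integrable (fun ξ : Vsp n => Real.exp (-δ * ‖ξ‖ ^ 2) * ‖𝓕 f ξ‖ ^ 2) volume := by
    intro δ hδ
    apply Integrable.mono' ((gauss_int_real (n := n) hδ).mul_const ((∫ x, ‖f x‖) ^ 2))
    · exact ((Real.continuous_exp.comp (by fun_prop)).mul ((h𝓕c.norm).pow 2)).aestronglyMeasurable
    · refine ae_of_all _ fun ξ => ?_
      have h1 : (0:ℝ) ≤ Real.exp (-δ * ‖ξ‖ ^ 2) * ‖𝓕 f ξ‖ ^ 2 := by positivity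
      rw [Real.norm_eq_abs, _root_.abs_of_nonneg h1]
      apply mul_le_mul_of_nonneg_left _ (Real.exp_nonneg _)
      exact pow_le_pow_left₀ (norm_nonneg _) (hbound ξ) 2
  -- monotone family
  set F : ℕ → Vsp n → ENNReal := fun k ξ =>
    ENNReal.ofReal (Real.exp (-(1/(k+1) : ℝ) * ‖ξ‖ ^ 2) * ‖𝓕 f ξ‖ ^ 2) with hFdef
  have hFmeas : ∀ k, Measurable (F k) := by
    intro k
    exact ((Real.continuous_exp.comp (by fun_prop)).mul
      ((h𝓕c.norm).pow 2)).measurable.ennreal_ofReal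
  have hFmono : Monotone F := by
    intro k l hkl ξ
    apply ENNReal.ofReal_le_ofReal
    apply mul_le_mul_of_nonneg_right _ (sq_nonneg _)
    apply Real.exp_le_exp.mpr
    have h1 : (1 : ℝ)/(l+1) ≤ 1/(k+1) := by
      apply one_div_le_one_div_of_le (by positivity)
      push_cast; linarith [(Nat.cast_le (α := ℝ)).mpr hkl]
    nlinarith [sq_nonneg ‖ξ‖]
  have hFsup : ∀ ξ, (⨆ k, F k ξ) = ENNReal.ofReal (‖𝓕 f ξ‖ ^ 2) := by
    intro ξ
    have hmono : Monotone fun k => F k ξ := fun k l hkl => hFmono hkl ξ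
    have ht1 : Filter.Tendsto (fun k : ℕ => F k ξ) Filter.atTop
        (nhds (ENNReal.ofReal (‖𝓕 f ξ‖ ^ 2))) := by
      have ht0 : Filter.Tendsto (fun k : ℕ => (1/(k+1) : ℝ)) Filter.atTop (nhds 0) :=
        tendsto_one_div_add_atTop_nhds_zero_nat
      have hcont : Continuous fun s : ℝ =>
          ENNReal.ofReal (Real.exp (-s * ‖ξ‖ ^ 2) * ‖𝓕 f ξ‖ ^ 2) := by
        apply ENNReal.continuous_ofReal.comp
        fun_prop
      have h2 := (hcont.tendsto 0).comp ht0
      have h3 : ENNReal.ofReal (Real.exp (-(0:ℝ) * ‖ξ‖ ^ 2) * ‖𝓕 f ξ‖ ^ 2)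
          = ENNReal.ofReal (‖𝓕 f ξ‖ ^ 2) := by norm_num
      rw [h3] at h2
      exact h2
    exact tendsto_nhds_unique (tendsto_atTop_iSup hmono) ht1
  calc (∫⁻ ξ : Vsp n, ENNReal.ofReal (‖𝓕 f ξ‖ ^ 2))
      = ∫⁻ ξ : Vsp n, ⨆ k, F k ξ := by simp_rw [hFsup]
    _ = ⨆ k, ∫⁻ ξ : Vsp n, F k ξ := lintegral_iSup hFmeas hFmono
    _ ≤ ENNReal.ofReal (∫ x, ‖f x‖ ^ 2) := by
        apply iSup_le
        intro k
        have hδ : (0:ℝ) < 1/(k+1) := by positivity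
        have hint := hgk _ hδ
        rw [hFdef]
        simp only
        rw [← ofReal_integral_eq_lintegral_ofReal hint (ae_of_all _ fun ξ => by positivity)]
        exact ENNReal.ofReal_le_ofReal (gauss_plancherel_aux f hf1 hf2 hδ)

/-- The one-parameter Mittag-Leffler function `E_β(z) = Σ z^k / Γ(kβ + 1)`. -/
noncomputable def mittagLeffler (β z : ℝ) : ℝ :=
  ∑' k : ℕ, z ^ k / Real.Gamma (k * β + 1)

/-- Smoothing estimate for the fractional-in-time, fractional-in-space propagator:
assuming `|E_β(−s)| ≤ C/(1+s)`, the operator with Fourier multiplier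
`E_β(−t^β|ξ|^α)` maps `L²` to `H^{σ,2}` with norm `O(t^{−σβ/α})` on `(0,T]`. -/
theorem stmt19 (n : ℕ) (β α σ T C : ℝ) (hβ0 : 0 < β) (hβ1 : β < 1)
    (hα1 : 1 < α) (hα2 : α ≤ 2) (hσ0 : 0 ≤ σ) (hσα : σ ≤ α)
    (hT : 0 < T) (hC : 0 < C)
    (hE : ∀ s : ℝ, 0 ≤ s → |mittagLeffler β (-s)| ≤ C / (1 + s)) :
    ∃ C' : ℝ, 0 < C' ∧ ∀ (u : EuclideanSpace ℝ (Fin n) → ℝ), MemLp u 2 volume →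
      ∀ t : ℝ, 0 < t → t ≤ T →
        (∫ ξ : EuclideanSpace ℝ (Fin n),
            (1 + ‖ξ‖ ^ (2 * σ)) * mittagLeffler β (-(t ^ β * ‖ξ‖ ^ α)) ^ 2 *
              ‖𝓕 (fun x => (u x : ℂ)) ξ‖ ^ 2) ≤
          C' * t ^ (-(2 * σ * β) / α) * ∫ x, u x ^ 2 := by
  have hα0 : (0:ℝ) < α := by linarith
  set ε : ℝ := 2 * σ * β / α with hεdef
  have hε0 : 0 ≤ ε := by positivity
  have hTε : (0:ℝ) < T ^ ε := Real.rpow_pos_of_pos hT ε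
  refine ⟨C ^ 2 * (T ^ ε + 1), by positivity, ?_⟩
  intro u hu t ht htT
  set f : EuclideanSpace ℝ (Fin n) → ℂ := fun x => ((u x : ℂ)) with hfdef
  have hre : (∫ x, u x ^ 2) = ∫ x : Vsp n, ‖f x‖ ^ 2 := by
    apply integral_congr_ae (ae_of_all _ fun x => ?_)
    rw [hfdef]
    simp [Complex.norm_real, sq_abs]
  have hexp_eq : t ^ (-(2 * σ * β) / α) = (t ^ ε)⁻¹ := by
    rw [hεdef, neg_div, Real.rpow_neg ht.le]
  have htε : (0:ℝ) < t ^ ε := Real.rpow_pos_of_pos ht ε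
  have hRHS0 : (0:ℝ) ≤ C ^ 2 * (T ^ ε + 1) * t ^ (-(2 * σ * β) / α) := by
    rw [hexp_eq]; positivity
  -- pointwise bound on the multiplier
  have hw : ∀ ξ : Vsp n, (1 + ‖ξ‖ ^ (2 * σ)) * mittagLeffler β (-(t ^ β * ‖ξ‖ ^ α)) ^ 2
      ≤ C ^ 2 * (T ^ ε + 1) * t ^ (-(2 * σ * β) / α) := by
    intro ξ
    set s : ℝ := t ^ β * ‖ξ‖ ^ α with hsdef
    have htβ : (0:ℝ) < t ^ β := Real.rpow_pos_of_pos ht β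
    have hξα : (0:ℝ) ≤ ‖ξ‖ ^ α := Real.rpow_nonneg (norm_nonneg ξ) α
    have hs0 : 0 ≤ s := by rw [hsdef]; positivity
    have h1s : (1:ℝ) ≤ 1 + s := by linarith
    have h1s0 : (0:ℝ) < 1 + s := by linarith
    have hE2 : mittagLeffler β (-s) ^ 2 ≤ C ^ 2 / (1 + s) ^ 2 := by
      have h := pow_le_pow_left₀ (abs_nonneg _) (hE s hs0) 2
      rwa [_root_.sq_abs, div_pow] at h
    have hb1 : mittagLeffler β (-s) ^ 2 ≤ C ^ 2 * T ^ ε * (t ^ ε)⁻¹ := by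
      have h1 : mittagLeffler β (-s) ^ 2 ≤ C ^ 2 := by
        refine le_trans hE2 (div_le_self (by positivity) ?_)
        nlinarith
      have h2 : (1:ℝ) ≤ T ^ ε * (t ^ ε)⁻¹ := by
        rw [← div_eq_mul_inv]
        rw [le_div_iff₀ htε, one_mul]
        exact Real.rpow_le_rpow ht.le htT hε0
      calc mittagLeffler β (-s) ^ 2 ≤ C ^ 2 := h1
        _ ≤ C ^ 2 * (T ^ ε * (t ^ ε)⁻¹) := le_mul_of_one_le_right (by positivity) h2
        _ = C ^ 2 * T ^ ε * (t ^ ε)⁻¹ := by ring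
    have hb2 : ‖ξ‖ ^ (2 * σ) * mittagLeffler β (-s) ^ 2 ≤ C ^ 2 * (t ^ ε)⁻¹ := by
      have hξs : ‖ξ‖ ^ (2 * σ) = s ^ (2 * σ / α) * (t ^ ε)⁻¹ := by
        have hξα' : ‖ξ‖ ^ α = s / t ^ β := by
          rw [hsdef]; field_simp
        have hexp : α * (2 * σ / α) = 2 * σ := by field_simp
        calc ‖ξ‖ ^ (2 * σ) = ‖ξ‖ ^ (α * (2 * σ / α)) := by rw [hexp]
          _ = (‖ξ‖ ^ α) ^ (2 * σ / α) := Real.rpow_mul (norm_nonneg ξ) _ _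
          _ = (s / t ^ β) ^ (2 * σ / α) := by rw [hξα']
          _ = s ^ (2 * σ / α) / (t ^ β) ^ (2 * σ / α) := Real.div_rpow hs0 htβ.le _
          _ = s ^ (2 * σ / α) / t ^ (β * (2 * σ / α)) := by rw [← Real.rpow_mul ht.le]
          _ = s ^ (2 * σ / α) / t ^ ε := by rw [show β * (2 * σ / α) = ε from by rw [hεdef]; ring]
          _ = s ^ (2 * σ / α) * (t ^ ε)⁻¹ := div_eq_mul_inv _ _
      have hsle : s ^ (2 * σ / α) ≤ (1 + s) ^ 2 := by
        calc s ^ (2 * σ / α) ≤ (1 + s) ^ (2 * σ / α) :=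
              Real.rpow_le_rpow hs0 (by linarith) (by positivity)
          _ ≤ (1 + s) ^ ((2:ℕ) : ℝ) :=
              Real.rpow_le_rpow_of_exponent_le h1s (by
                push_cast
                rw [div_le_iff₀ hα0]
                nlinarith)
          _ = (1 + s) ^ 2 := Real.rpow_natCast _ 2
      calc ‖ξ‖ ^ (2 * σ) * mittagLeffler β (-s) ^ 2
          ≤ ‖ξ‖ ^ (2 * σ) * (C ^ 2 / (1 + s) ^ 2) :=
            mul_le_mul_of_nonneg_left hE2 (Real.rpow_nonneg (norm_nonneg ξ) _)
        _ = (s ^ (2 * σ / α) * (t ^ ε)⁻¹) * (C ^ 2 / (1 + s) ^ 2) := by rw [hξs]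
        _ ≤ (((1 + s) ^ 2) * (t ^ ε)⁻¹) * (C ^ 2 / (1 + s) ^ 2) := by
            apply mul_le_mul_of_nonneg_right _ (by positivity)
            exact mul_le_mul_of_nonneg_right hsle (by positivity)
        _ = C ^ 2 * (t ^ ε)⁻¹ := by field_simp
    rw [hexp_eq]
    rw [show C ^ 2 * (T ^ ε + 1) * (t ^ ε)⁻¹
        = C ^ 2 * T ^ ε * (t ^ ε)⁻¹ + C ^ 2 * (t ^ ε)⁻¹ by ring, add_mul, one_mul]
    exact add_le_add hb1 hb2
  by_cases hint : Integrable f volume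
  · -- integrable case : use the Plancherel inequality
    have hfmem : MemLp f 2 volume := hu.ofReal
    have hf2 : Integrable (fun x : Vsp n => ‖f x‖ ^ 2) volume := by
      have h := hfmem.integrable_norm_rpow (by norm_num) (by norm_num)
      have heq : ∀ x : Vsp n, ‖f x‖ ^ ((2:ENNReal)).toReal = ‖f x‖ ^ 2 := by
        intro x
        rw [show ((2:ENNReal)).toReal = ((2:ℕ):ℝ) by norm_num, Real.rpow_natCast]
      exact h.congr (ae_of_all _ fun x => (heq x))
    have h𝓕c : Continuous (𝓕 f) :=
      VectorFourier.fourierIntegral_continuous Real.continuous_fourierChar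
        (by exact continuous_inner) hint
    have hP := plancherel_le f hint hf2
    have h𝓕sq : Integrable (fun ξ : Vsp n => ‖𝓕 f ξ‖ ^ 2) volume := by
      refine ⟨((h𝓕c.norm).pow 2).aestronglyMeasurable, ?_⟩
      have heq : ∀ ξ : Vsp n, ‖(‖𝓕 f ξ‖ ^ 2)‖ₑ = ENNReal.ofReal (‖𝓕 f ξ‖ ^ 2) :=
        fun ξ => by rw [← Real.enorm_eq_ofReal (by positivity)]
      show (∫⁻ ξ : Vsp n, ‖(‖𝓕 f ξ‖ ^ 2)‖ₑ) < ⊤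
      simp_rw [heq]
      exact lt_of_le_of_lt hP ENNReal.ofReal_lt_top
    have hgint : Integrable
        (fun ξ : Vsp n => C ^ 2 * (T ^ ε + 1) * t ^ (-(2 * σ * β) / α) * ‖𝓕 f ξ‖ ^ 2)
        volume := h𝓕sq.const_mul _
    have hmono := integral_mono_of_nonneg
      (f := fun ξ : Vsp n => (1 + ‖ξ‖ ^ (2 * σ)) * mittagLeffler β (-(t ^ β * ‖ξ‖ ^ α)) ^ 2 *
        ‖𝓕 f ξ‖ ^ 2)
      (ae_of_all _ fun ξ => by positivity) hgint
      (ae_of_all _ fun ξ => mul_le_mul_of_nonneg_right (hw ξ) (sq_nonneg _))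
    refine le_trans hmono ?_
    rw [integral_const_mul, hre]
    apply mul_le_mul_of_nonneg_left _ hRHS0
    have h1 : (∫ ξ : Vsp n, ‖𝓕 f ξ‖ ^ 2)
        = (∫⁻ ξ : Vsp n, ENNReal.ofReal (‖𝓕 f ξ‖ ^ 2)).toReal :=
      integral_eq_lintegral_of_nonneg_ae (ae_of_all _ fun ξ => by positivity)
        ((h𝓕c.norm).pow 2).aestronglyMeasurable
    rw [h1]
    exact ENNReal.toReal_le_of_le_ofReal (integral_nonneg fun x => by positivity) hP
  · -- non-integrable case : the Fourier transform vanishes identically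
    have h𝓕0 : ∀ ξ : Vsp n, 𝓕 f ξ = 0 := by
      intro ξ
      rw [Real.fourier_eq]
      apply integral_undef
      intro hcon
      exact hint ((Real.fourierIntegral_convergent_iff ξ).mp hcon)
    have hzero : ∀ ξ : Vsp n,
        (1 + ‖ξ‖ ^ (2 * σ)) * mittagLeffler β (-(t ^ β * ‖ξ‖ ^ α)) ^ 2 * ‖𝓕 f ξ‖ ^ 2 = 0 :=
      fun ξ => by rw [h𝓕0 ξ]; simp
    rw [integral_congr_ae (ae_of_all _ hzero), integral_zero]
    have hu2 : 0 ≤ ∫ x, u x ^ 2 := integral_nonneg fun x => sq_nonneg _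
    rw [hexp_eq]
    positivity
end
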